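/- arXiv:1412.5162 — 3 statements merged into one kernel-verified Lean document; each statement's English description precedes it below -/
import Mathlib

section
/- If χ is a real non-principal Dirichlet character modulo N, then L(1, χ) ≠ 0. -/
/-- If `χ` is a real non-principal Dirichlet character modulo `N`
(real meaning all its values are real numbers), then `L(1, χ) ≠ 0`. -/
theorem lfunction_apply_one_ne_zero_of_real {N : ℕ} [NeZero N]
    (χ : DirichletCharacter ℂ N) (hreal : ∀ a : ZMod N, (χ a).im = 0)
    (hχ : χ ≠ 1) :
    DirichletCharacter.LFunction χ 1 ≠ 0 := by
  exact DirichletCharacter.LFunction_ne_zero_of_re_eq_one χ (by norm_num) (Or.inl hχ)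
end

section
/- Let χ be a real Dirichlet character modulo N, and for each positive integer n set c_n = ∑_{d ∣ n} χ(d) (the Dirichlet convolution of the constant function 1 with χ). Then c_n ≥ 0 for every n ≥ 1. -/
open scoped ComplexOrder

open ArithmeticFunction Finset

lemma char_val_cases {N : ℕ} [NeZero N] (χ : DirichletCharacter ℂ N)
    (hreal : ∀ x : ZMod N, (χ x).im = 0) (a : ZMod N) :
    χ a = 0 ∨ χ a = 1 ∨ χ a = -1 := by
  by_cases h : IsUnit a
  · right
    have hm : Fintype.card (ZMod N)ˣ ≠ 0 := Fintype.card_ne_zero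
    have h1 : (χ a) ^ Fintype.card (ZMod N)ˣ = 1 := by
      rw [← map_pow]
      obtain ⟨u, rfl⟩ := h
      rw [← Units.val_pow_eq_pow_val, pow_card_eq_one, Units.val_one, map_one]
    have hre : χ a = ((χ a).re : ℂ) := by
      rw [Complex.ext_iff]; simp [hreal a]
    set x : ℝ := (χ a).re
    have hx : (x : ℂ) ^ Fintype.card (ZMod N)ˣ = 1 := by rw [← hre]; exact h1
    have hx' : x ^ Fintype.card (ZMod N)ˣ = 1 := by exact_mod_cast hx
    have : x = 1 ∨ x = -1 := by
      have habs : |x| ^ Fintype.card (ZMod N)ˣ = 1 := by rw [← abs_pow, hx', abs_one]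
      have : |x| = 1 := by
        rcases lt_trichotomy |x| 1 with hh|hh|hh
        · nlinarith [pow_lt_one₀ (abs_nonneg x) hh hm]
        · exact hh
        · nlinarith [one_lt_pow₀ hh hm]
      rcases abs_eq (by norm_num : (0:ℝ) ≤ 1) |>.mp this with h|h
      · left; exact h
      · right; exact h
    rcases this with h|h <;> [left; right] <;> rw [hre, h] <;> norm_num
  · left; exact χ.map_nonunit h

/-- For a real Dirichlet character `χ` mod `N`, the coefficients
`c n = ∑_{d ∣ n} χ(d)` satisfy `c n ≥ 0` for every `n ≥ 1`. -/
theorem zeta_mul_char_coeff_nonneg {N : ℕ} [NeZero N]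
    (χ : DirichletCharacter ℂ N) (hreal : ∀ x : ZMod N, (χ x).im = 0)
    (c : ℕ → ℂ) (hc : ∀ n, c n = ∑ d ∈ n.divisors, χ (d : ZMod N))
    (n : ℕ) (hn : 1 ≤ n) :
    0 ≤ c n := by
  set g : ArithmeticFunction ℂ := toArithmeticFunction (fun d => χ (d : ZMod N)) with hg
  have hgval : ∀ d : ℕ, d ≠ 0 → g d = χ (d : ZMod N) := by
    intro d hd
    simp [hg, toArithmeticFunction, hd]
  have hgm : g.IsMultiplicative := by
    rw [ArithmeticFunction.IsMultiplicative.iff_ne_zero]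
    constructor
    · rw [hgval 1 one_ne_zero]; simp
    · intro m n hm hn' _
      rw [hgval _ (mul_ne_zero hm hn'), hgval _ hm, hgval _ hn', Nat.cast_mul, map_mul]
  set f : ArithmeticFunction ℂ := (zeta : ArithmeticFunction ℂ) * g with hf
  have hfm : f.IsMultiplicative := isMultiplicative_zeta.natCast.mul hgm
  have hcf : c n = f n := by
    rw [hc, hf, coe_zeta_mul_apply]
    apply Finset.sum_congr rfl
    intro d hd
    rw [hgval d (Nat.pos_of_mem_divisors hd).ne']
  rw [hcf, hfm.multiplicative_factorization f (by omega : n ≠ 0)]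
  rw [Finsupp.prod]
  apply Finset.prod_nonneg
  intro p hp
  have hpp : p.Prime := Nat.prime_of_mem_primeFactors (by rwa [Nat.support_factorization] at hp)
  set k := n.factorization p
  have hfpk : f (p ^ k) = ∑ i ∈ range (k + 1), (χ (p : ZMod N)) ^ i := by
    rw [hf, coe_zeta_mul_apply, Nat.sum_divisors_prime_pow hpp]
    apply Finset.sum_congr rfl
    intro i _
    rw [hgval _ (pow_ne_zero i hpp.pos.ne'), Nat.cast_pow, map_pow]
  rw [hfpk]
  rcases char_val_cases χ hreal (p : ZMod N) with h|h|h <;> rw [h]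
  · rw [Finset.sum_range_succ']
    simp only [zero_pow, pow_zero]
    rw [Finset.sum_congr rfl (fun i _ => zero_pow (Nat.succ_ne_zero i))]
    simp [Complex.le_def]
  · simp only [one_pow, Finset.sum_const, card_range, nsmul_eq_mul, mul_one]
    have : (0:ℂ) ≤ ((k:ℝ) + 1 : ℝ) := by positivity
    simpa using this
  · rw [neg_one_geom_sum]
    split <;> simp [Complex.le_def]
end

section
/- Let χ be a real Dirichlet character modulo N, and for each positive integer n set c_n = ∑_{d ∣ n} χ(d). Then for every real X ≥ 1, the partial sum ∑_{1 ≤ n ≤ X} c_n · n^{-1/2} is at least ∑_{1 ≤ m ≤ √X} 1/m. -/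
open scoped ComplexOrder
open Finset ArithmeticFunction

section Aux
variable {N : ℕ} [NeZero N] (χ : DirichletCharacter ℂ N)

/-- The real part of the character as an arithmetic function. -/
noncomputable def auxF : ArithmeticFunction ℝ :=
  ⟨fun d => if d = 0 then 0 else (χ (d : ZMod N)).re, by simp⟩

variable (hreal : ∀ x : ZMod N, (χ x).im = 0)

lemma auxF_apply (d : ℕ) : auxF χ d = if d = 0 then 0 else (χ (d : ZMod N)).re := rfl

include hreal

lemma aux_val (x : ZMod N) : (χ x).re = 0 ∨ (χ x).re = 1 ∨ (χ x).re = -1 := by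
  by_cases hu : IsUnit x
  · obtain ⟨u, rfl⟩ := hu
    have ht : (N.totient : ℕ) ≠ 0 := Nat.totient_pos.mpr (Nat.pos_of_ne_zero (NeZero.ne N)) |>.ne'
    have hx : (χ (u : ZMod N)) ^ N.totient = 1 := by
      rw [← map_pow, ← Units.val_pow_eq_pow_val, ZMod.pow_totient, Units.val_one, map_one]
    have hxr : χ (u : ZMod N) = ((χ (u : ZMod N)).re : ℂ) :=
      Complex.ext rfl (by simp [hreal])
    have : ((χ (u : ZMod N)).re : ℝ) ^ N.totient = 1 := by
      have := hx
      rw [hxr] at this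
      exact_mod_cast this
    rcases (pow_eq_one_iff_of_ne_zero ht).mp this with h | h
    · exact Or.inr (Or.inl h)
    · exact Or.inr (Or.inr h.1)
  · left; rw [χ.map_nonunit hu]; simp

lemma aux_re_mul (a b : ZMod N) : (χ (a * b)).re = (χ a).re * (χ b).re := by
  rw [map_mul, Complex.mul_re, hreal a, hreal b]; ring

lemma auxF_mult : (auxF χ).IsMultiplicative := by
  constructor
  · simp [auxF]
  · intro m n _
    rcases eq_or_ne m 0 with rfl | hm
    · simp [auxF_apply]
    rcases eq_or_ne n 0 with rfl | hn
    · simp [auxF_apply]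
    rw [auxF_apply, auxF_apply, auxF_apply, if_neg (mul_ne_zero hm hn), if_neg hm, if_neg hn,
      Nat.cast_mul]
    exact aux_re_mul χ hreal _ _

end Aux

section Aux2
variable {N : ℕ} [NeZero N] (χ : DirichletCharacter ℂ N)

/-- Divisor sum of the real parts. -/
noncomputable def auxG : ArithmeticFunction ℝ := ↑(zeta : ArithmeticFunction ℕ) * auxF χ

lemma auxG_apply (n : ℕ) : auxG χ n = ∑ d ∈ n.divisors, auxF χ d := coe_zeta_mul_apply

variable (hreal : ∀ x : ZMod N, (χ x).im = 0)
include hreal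

lemma auxG_mult : (auxG χ).IsMultiplicative :=
  isMultiplicative_zeta.natCast.mul (auxF_mult χ hreal)

lemma auxG_prime_pow {p : ℕ} (hp : p.Prime) (k : ℕ) :
    auxG χ (p ^ k) = ∑ i ∈ range (k + 1), ((χ (p : ZMod N)).re) ^ i := by
  rw [auxG_apply, Nat.sum_divisors_prime_pow hp]
  refine Finset.sum_congr rfl fun i _ => ?_
  rw [auxF_apply, if_neg (pow_ne_zero i hp.pos.ne')]
  have h1 : ((p ^ i : ℕ) : ZMod N) = ((p : ZMod N)) ^ i := by push_cast; ring
  rw [h1, map_pow]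
  have hxr : χ (p : ZMod N) = (((χ (p : ZMod N)).re : ℝ) : ℂ) :=
    Complex.ext rfl (by simp [hreal])
  conv_lhs => rw [hxr, ← Complex.ofReal_pow, Complex.ofReal_re]

lemma aux_geom_nonneg {t : ℝ} (ht : t = 0 ∨ t = 1 ∨ t = -1) (k : ℕ) :
    0 ≤ ∑ i ∈ range (k + 1), t ^ i := by
  rcases ht with rfl | rfl | rfl
  · rw [Finset.sum_range_succ']; simp
  · simp; positivity
  · rw [neg_one_geom_sum]; split <;> norm_num

lemma aux_geom_one {t : ℝ} (ht : t = 0 ∨ t = 1 ∨ t = -1) {k : ℕ} (hk : Even k) :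
    1 ≤ ∑ i ∈ range (k + 1), t ^ i := by
  rcases ht with rfl | rfl | rfl
  · rw [Finset.sum_range_succ']; simp
  · simp
  · rw [neg_one_geom_sum, if_neg (by simpa using Nat.even_add_one.not.mpr (by simpa using hk))]

lemma auxG_nonneg {n : ℕ} (hn : n ≠ 0) : 0 ≤ auxG χ n := by
  rw [(auxG_mult χ hreal).multiplicative_factorization _ hn]
  refine Finset.prod_nonneg fun p hp => ?_
  dsimp only
  have hpp : p.Prime := Nat.prime_of_mem_primeFactors (by simpa using hp)
  rw [auxG_prime_pow χ hreal hpp]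
  exact aux_geom_nonneg χ hreal (aux_val χ hreal _) _

lemma auxG_sq {m : ℕ} (hm : m ≠ 0) : 1 ≤ auxG χ (m ^ 2) := by
  rw [(auxG_mult χ hreal).multiplicative_factorization _ (pow_ne_zero 2 hm)]
  calc (1 : ℝ) = ∏ _p ∈ (m ^ 2).factorization.support, 1 := by simp
    _ ≤ _ := by
        refine Finset.prod_le_prod (by simp) fun p hp => ?_
        dsimp only
        have hpp : p.Prime := Nat.prime_of_mem_primeFactors (by simpa using hp)
        rw [auxG_prime_pow χ hreal hpp]
        refine aux_geom_one χ hreal (aux_val χ hreal _) ?_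
        rw [Nat.factorization_pow]
        exact ⟨m.factorization p, by simp [two_mul]⟩

end Aux2

/-- For a real Dirichlet character `χ` mod `N` with coefficients
`c n = ∑_{d ∣ n} χ(d)`, and any real `X ≥ 1`, the partial sum
`∑_{1 ≤ n ≤ X} c n · n^{-1/2}` is at least `∑_{1 ≤ m ≤ √X} 1/m`. -/
theorem partial_sum_ge_harmonic {N : ℕ} [NeZero N]
    (χ : DirichletCharacter ℂ N) (hreal : ∀ x : ZMod N, (χ x).im = 0)
    (c : ℕ → ℂ) (hc : ∀ n, c n = ∑ d ∈ n.divisors, χ (d : ZMod N))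
    (X : ℝ) (hX : 1 ≤ X) :
    ∑ m ∈ Finset.Icc 1 ⌊Real.sqrt X⌋₊, (1 : ℂ) / m ≤
      ∑ n ∈ Finset.Icc 1 ⌊X⌋₊, c n * (n : ℂ) ^ (-(1 / 2 : ℂ)) := by
  have key : ∀ n : ℕ, n ≠ 0 → c n = ((auxG χ n : ℝ) : ℂ) := by
    intro n hn
    rw [hc, auxG_apply, Complex.ofReal_sum]
    refine Finset.sum_congr rfl fun d hd => ?_
    have hd0 : d ≠ 0 := (Nat.pos_of_mem_divisors hd).ne'
    rw [auxF_apply, if_neg hd0]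
    exact Complex.ext rfl (by simp [hreal])
  have hrhs : ∑ n ∈ Finset.Icc 1 ⌊X⌋₊, c n * (n : ℂ) ^ (-(1 / 2 : ℂ)) =
      ((∑ n ∈ Finset.Icc 1 ⌊X⌋₊, auxG χ n * (n : ℝ) ^ (-(1 / 2) : ℝ) : ℝ) : ℂ) := by
    rw [Complex.ofReal_sum]
    refine Finset.sum_congr rfl fun n hn => ?_
    have hn1 : 1 ≤ n := (Finset.mem_Icc.mp hn).1
    rw [key n (by omega), Complex.ofReal_mul]
    congr 1
    rw [Complex.ofReal_cpow (show (0:ℝ) ≤ (n:ℝ) by positivity)]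
    norm_num
  have hlhs : ∑ m ∈ Finset.Icc 1 ⌊Real.sqrt X⌋₊, (1 : ℂ) / m =
      ((∑ m ∈ Finset.Icc 1 ⌊Real.sqrt X⌋₊, (1 : ℝ) / m : ℝ) : ℂ) := by
    push_cast
    rfl
  rw [hlhs, hrhs, Complex.real_le_real]
  set M := ⌊Real.sqrt X⌋₊ with hM
  calc ∑ m ∈ Finset.Icc 1 M, (1 : ℝ) / m
      ≤ ∑ m ∈ Finset.Icc 1 M, auxG χ (m ^ 2) * ((m ^ 2 : ℕ) : ℝ) ^ (-(1 / 2) : ℝ) := by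
        refine Finset.sum_le_sum fun m hm => ?_
        have hm1 : 1 ≤ m := (Finset.mem_Icc.mp hm).1
        have hmpos : (0:ℝ) < m := by exact_mod_cast hm1
        have hpow : ((m ^ 2 : ℕ) : ℝ) ^ (-(1 / 2) : ℝ) = 1 / m := by
          push_cast
          rw [← Real.rpow_natCast (m : ℝ) 2, ← Real.rpow_mul hmpos.le]
          norm_num
          rw [Real.rpow_neg_one]
        rw [hpow]
        calc (1:ℝ) / m = 1 * (1 / m) := by ring
          _ ≤ auxG χ (m ^ 2) * (1 / m) :=
            mul_le_mul_of_nonneg_right (auxG_sq χ hreal (by omega)) (by positivity)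
    _ = ∑ n ∈ (Finset.Icc 1 M).image (· ^ 2), auxG χ n * (n : ℝ) ^ (-(1 / 2) : ℝ) := by
        have hinj : ∀ a ∈ Finset.Icc 1 M, ∀ b ∈ Finset.Icc 1 M, a ^ 2 = b ^ 2 → a = b :=
          fun a _ b _ h => Nat.pow_left_injective (by norm_num) h
        exact (Finset.sum_image (f := fun n : ℕ => auxG χ n * (n : ℝ) ^ (-(1 / 2) : ℝ)) hinj).symm
    _ ≤ ∑ n ∈ Finset.Icc 1 ⌊X⌋₊, auxG χ n * (n : ℝ) ^ (-(1 / 2) : ℝ) := by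
        refine Finset.sum_le_sum_of_subset_of_nonneg ?_ ?_
        · intro n hn
          simp only [Finset.mem_image] at hn
          obtain ⟨m, hm, rfl⟩ := hn
          obtain ⟨hm1, hmM⟩ := Finset.mem_Icc.mp hm
          refine Finset.mem_Icc.mpr ⟨Nat.one_le_pow _ _ (by omega), ?_⟩
          apply Nat.le_floor
          have h1 : (m : ℝ) ≤ Real.sqrt X := by
            calc (m : ℝ) ≤ (M : ℝ) := by exact_mod_cast hmM
              _ ≤ Real.sqrt X := Nat.floor_le (Real.sqrt_nonneg X)
          calc ((m ^ 2 : ℕ) : ℝ) = (m : ℝ) ^ 2 := by push_cast; ring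
            _ ≤ Real.sqrt X ^ 2 := by
                refine pow_le_pow_left₀ (by positivity) h1 2
            _ = X := Real.sq_sqrt (by linarith)
        · intro n hn _
          have hn1 : 1 ≤ n := (Finset.mem_Icc.mp hn).1
          exact mul_nonneg (auxG_nonneg χ hreal (by omega))
            (Real.rpow_nonneg (by positivity) _)
end
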